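/- arXiv:1906.05790 — 3 statements merged into one kernel-verified Lean document; each statement's English description precedes it below -/
import Mathlib

section
/- Let A and B be n×n symmetric 0-1 matrices, each having no zero row (no isolated vertices). If there exists a 2n×2n permutation matrix P with Pᵀ [[0,A],[A,0]] P = [[0,B],[B,0]], then there exist n×n permutation matrices Q and R such that Q A R = B. -/
open Matrix

/-- `P` is a permutation matrix. -/
def Matrix.IsPermMatrix {m : Type*} [Fintype m] [DecidableEq m] (P : Matrix m m ℝ) : Prop :=
  ∃ σ : Equiv.Perm m, P = σ.permMatrix ℝ

open Finset

section Aux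

private lemma sdr_two_options {X Y : Type*} [Fintype X] [DecidableEq Y]
    (f1 f2 : X → Y)
    (hdeg : ∀ M : Y, #{K : X | f1 K = M} + #{K : X | f2 K = M} = 2) :
    ∃ G : X → Y, Function.Injective G ∧ ∀ K, G K = f1 K ∨ G K = f2 K := by
  classical
  have hall := (Finset.all_card_le_biUnion_card_iff_exists_injective
      (fun K : X => ({f1 K, f2 K} : Finset Y))).1 ?_
  · obtain ⟨G, hi, ho⟩ := hall
    exact ⟨G, hi, fun K => by simpa using ho K⟩
  intro s
  set N := s.biUnion (fun K => ({f1 K, f2 K} : Finset Y)) with hN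
  have hmem : ∀ K ∈ s, f1 K ∈ N ∧ f2 K ∈ N := by
    intro K hK
    constructor <;> exact Finset.mem_biUnion.2 ⟨K, hK, by simp⟩
  have h1 : s.card ≤ #(univ.filter (fun K => f1 K ∈ N)) :=
    card_le_card (fun K hK => mem_filter.2 ⟨mem_univ _, (hmem K hK).1⟩)
  have h2 : s.card ≤ #(univ.filter (fun K => f2 K ∈ N)) :=
    card_le_card (fun K hK => mem_filter.2 ⟨mem_univ _, (hmem K hK).2⟩)
  have e1 : #(univ.filter (fun K => f1 K ∈ N)) = ∑ M ∈ N, #{K : X | f1 K = M} := by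
    rw [Finset.card_eq_sum_card_fiberwise (f := f1) (s := univ.filter (fun K => f1 K ∈ N)) (t := N) (fun K hK => (mem_filter.1 hK).2)]
    refine Finset.sum_congr rfl (fun M hM => ?_)
    congr 1
    ext K
    simp only [Finset.mem_filter, Finset.mem_univ, true_and, and_iff_right_iff_imp]
    exact fun h => h ▸ hM
  have e2 : #(univ.filter (fun K => f2 K ∈ N)) = ∑ M ∈ N, #{K : X | f2 K = M} := by
    rw [Finset.card_eq_sum_card_fiberwise (f := f2) (s := univ.filter (fun K => f2 K ∈ N)) (t := N) (fun K hK => (mem_filter.1 hK).2)]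
    refine Finset.sum_congr rfl (fun M hM => ?_)
    congr 1
    ext K
    simp only [Finset.mem_filter, Finset.mem_univ, true_and, and_iff_right_iff_imp]
    exact fun h => h ▸ hM
  have : 2 * s.card ≤ 2 * N.card := by
    calc 2 * s.card = s.card + s.card := by ring
    _ ≤ _ + _ := Nat.add_le_add h1 h2
    _ = ∑ M ∈ N, (#{K : X | f1 K = M} + #{K : X | f2 K = M}) := by
        rw [e1, e2, Finset.sum_add_distrib]
    _ = ∑ M ∈ N, 2 := Finset.sum_congr rfl (fun M _ => hdeg M)
    _ = 2 * N.card := by rw [Finset.sum_const, smul_eq_mul, mul_comm]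
  omega

private lemma filter_card_u {X Y : Type*} [Fintype X] [DecidableEq X] [DecidableEq Y]
    (F : X ≃ Y) (ρ : Y ≃ Y) (hρ : ∀ M, ρ (ρ M) = M) (ε : X → Bool) (M : Y) :
    #{K : X | (if ε K then F K else ρ (F K)) = M}
      = (if ε (F.symm M) then 1 else 0) + (if ε (F.symm (ρ M)) then 0 else 1) := by
  have hiff : ∀ K : X, ((if ε K then F K else ρ (F K)) = M ↔
      (ε K = true ∧ K = F.symm M) ∨ (ε K = false ∧ K = F.symm (ρ M))) := by
    intro K
    rcases h : ε K with _ | _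
    · simp only [h, Bool.false_eq_true, if_false, false_and, false_or, true_and]
      constructor
      · intro hh
        have h2 : F K = ρ M := by
          have := congrArg ρ hh
          rwa [hρ] at this
        rw [← h2, Equiv.symm_apply_apply]
      · intro hh; subst hh; rw [Equiv.apply_symm_apply, hρ]
    · simp only [h, if_true, true_and, Bool.true_eq_false, false_and, or_false]
      constructor
      · intro hh; rw [← hh, Equiv.symm_apply_apply]
      · intro hh; subst hh; rw [Equiv.apply_symm_apply]
  rcases ha : ε (F.symm M) with _ | _ <;> rcases hb : ε (F.symm (ρ M)) with _ | _
  · have hset : ({K : X | (if ε K then F K else ρ (F K)) = M} : Finset X) = {F.symm (ρ M)} := by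
      ext K
      simp only [mem_filter, mem_univ, true_and, mem_singleton, hiff]
      constructor
      · rintro (⟨h1, rfl⟩ | ⟨h1, rfl⟩)
        · rw [ha] at h1; cases h1
        · rfl
      · rintro rfl; exact Or.inr ⟨hb, rfl⟩
    rw [hset]; simp
  · have hset : ({K : X | (if ε K then F K else ρ (F K)) = M} : Finset X) = ∅ := by
      ext K
      simp only [mem_filter, mem_univ, true_and, notMem_empty, iff_false, hiff]
      rintro (⟨h1, rfl⟩ | ⟨h1, rfl⟩)
      · rw [ha] at h1; cases h1
      · rw [hb] at h1; cases h1
    rw [hset]; simp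
  · have hne : F.symm M ≠ F.symm (ρ M) := by
      intro h; rw [h, hb] at ha; cases ha
    have hset : ({K : X | (if ε K then F K else ρ (F K)) = M} : Finset X)
        = {F.symm M, F.symm (ρ M)} := by
      ext K
      simp only [mem_filter, mem_univ, true_and, mem_insert, mem_singleton, hiff]
      constructor
      · rintro (⟨h1, rfl⟩ | ⟨h1, rfl⟩)
        · exact Or.inl rfl
        · exact Or.inr rfl
      · rintro (rfl | rfl)
        · exact Or.inl ⟨ha, rfl⟩
        · exact Or.inr ⟨hb, rfl⟩
    rw [hset, card_pair hne]; simp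
  · have hset : ({K : X | (if ε K then F K else ρ (F K)) = M} : Finset X) = {F.symm M} := by
      ext K
      simp only [mem_filter, mem_univ, true_and, mem_singleton, hiff]
      constructor
      · rintro (⟨h1, rfl⟩ | ⟨h1, rfl⟩)
        · rfl
        · rw [hb] at h1; cases h1
      · rintro rfl; exact Or.inl ⟨ha, rfl⟩
    rw [hset]; simp

private lemma deg_two {X Y : Type*} [Fintype X] [DecidableEq X] [DecidableEq Y]
    (F : X ≃ Y) (ρ : Y ≃ Y) (hρ : ∀ M, ρ (ρ M) = M) (σ : X ≃ X) (ε : X → Bool) (M : Y) :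
    #{K : X | (if ε K then F K else ρ (F K)) = M}
      + #{K : X | ρ (if ε (σ K) then F (σ K) else ρ (F (σ K))) = M} = 2 := by
  have hstep1 : ({K : X | ρ (if ε (σ K) then F (σ K) else ρ (F (σ K))) = M} : Finset X)
      = ({K : X | (if ε (σ K) then F (σ K) else ρ (F (σ K))) = ρ M} : Finset X) := by
    ext K
    simp only [mem_filter, mem_univ, true_and]
    constructor
    · intro h; have := congrArg ρ h; rwa [hρ] at this
    · intro h; rw [h, hρ]
  have hstep2 : #({K : X | (if ε (σ K) then F (σ K) else ρ (F (σ K))) = ρ M} : Finset X)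
      = #({K : X | (if ε K then F K else ρ (F K)) = ρ M} : Finset X) := by
    apply Finset.card_bij' (fun K _ => σ K) (fun K _ => σ.symm K)
    · intro K hK
      simp only [mem_filter, mem_univ, true_and] at hK ⊢
      exact hK
    · intro K hK
      simp only [mem_filter, mem_univ, true_and] at hK ⊢
      rwa [Equiv.apply_symm_apply]
    · intro K _; exact Equiv.symm_apply_apply σ K
    · intro K _; exact Equiv.apply_symm_apply σ K
  rw [hstep1, hstep2, filter_card_u F ρ hρ ε M, filter_card_u F ρ hρ ε (ρ M), hρ]
  rcases ha : ε (F.symm M) with _ | _ <;> rcases hb : ε (F.symm (ρ M)) with _ | _ <;>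
    simp [ha, hb]

private lemma eqvGen_map {α β : Type*} {r : α → α → Prop} {s : β → β → Prop} (f : α → β)
    (h : ∀ a b, r a b → s (f a) (f b)) {a b : α} (hab : Relation.EqvGen r a b) :
    Relation.EqvGen s (f a) (f b) := by
  induction hab with
  | rel x y hxy => exact Relation.EqvGen.rel _ _ (h _ _ hxy)
  | refl x => exact Relation.EqvGen.refl _
  | symm x y _ ih => exact Relation.EqvGen.symm _ _ ih
  | trans x y z _ _ ih1 ih2 => exact Relation.EqvGen.trans _ _ _ ih1 ih2

private lemma eqvGen_lift_const {α β : Type*} {r : α → α → Prop} (f : α → β)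
    (h : ∀ a b, r a b → f a = f b) {a b : α} (hab : Relation.EqvGen r a b) : f a = f b := by
  induction hab with
  | rel x y hxy => exact h _ _ hxy
  | refl x => rfl
  | symm x y _ ih => exact ih.symm
  | trans x y z _ _ ih1 ih2 => exact ih1.trans ih2

private def covRel {n : ℕ} (A : Matrix (Fin n) (Fin n) ℝ) (u v : Fin n ⊕ Fin n) : Prop :=
  Matrix.fromBlocks 0 A A 0 u v ≠ 0

private def covSetoid {n : ℕ} (A : Matrix (Fin n) (Fin n) ℝ) : Setoid (Fin n ⊕ Fin n) :=
  Relation.EqvGen.setoid (covRel A)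

private lemma fromBlocks_swap {n : ℕ} (A : Matrix (Fin n) (Fin n) ℝ) :
    ∀ u v, Matrix.fromBlocks 0 A A 0 (Sum.swap u) (Sum.swap v)
      = Matrix.fromBlocks 0 A A 0 u v := by
  rintro (i | i) (j | j) <;> simp

private lemma covRel_side {n : ℕ} {A : Matrix (Fin n) (Fin n) ℝ} :
    ∀ {u v}, covRel A u v → u.isLeft ≠ v.isLeft := by
  rintro (i | i) (j | j) h <;> simp [covRel] at h ⊢

end Aux

/-- Graphs without isolated vertices having isomorphic canonical double coverings
are two-fold isomorphic. -/
theorem tf_isom_of_cdc_iso {n : ℕ} (A B : Matrix (Fin n) (Fin n) ℝ)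
    (hA : A.IsSymm) (hB : B.IsSymm)
    (hA01 : ∀ i j, A i j = 0 ∨ A i j = 1) (hB01 : ∀ i j, B i j = 0 ∨ B i j = 1)
    (hAiso : ∀ i, ∃ j, A i j ≠ 0) (hBiso : ∀ i, ∃ j, B i j ≠ 0)
    (P : Matrix (Fin n ⊕ Fin n) (Fin n ⊕ Fin n) ℝ) (hP : P.IsPermMatrix)
    (hconj : Pᵀ * Matrix.fromBlocks 0 A A 0 * P = Matrix.fromBlocks 0 B B 0) :
    ∃ Q R : Matrix (Fin n) (Fin n) ℝ,
      Q.IsPermMatrix ∧ R.IsPermMatrix ∧ Q * A * R = B := by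
  classical
  obtain ⟨σp, rfl⟩ := hP
  set τ : (Fin n ⊕ Fin n) ≃ (Fin n ⊕ Fin n) := σp.symm with hτdef
  -- the pointwise form of the conjugation relation
  have key : ∀ u v, Matrix.fromBlocks 0 B B 0 u v
      = Matrix.fromBlocks 0 A A 0 (τ u) (τ v) := by
    have hPt : (σp.permMatrix ℝ)ᵀ = (σp.symm.toPEquiv).toMatrix := by
      rw [Equiv.toPEquiv_symm, PEquiv.toMatrix_symm]
    have h2 : (Matrix.fromBlocks 0 B B 0 : Matrix (Fin n ⊕ Fin n) (Fin n ⊕ Fin n) ℝ)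
        = (Matrix.fromBlocks 0 A A 0).submatrix σp.symm σp.symm := by
      rw [← hconj, hPt, PEquiv.toMatrix_toPEquiv_mul, PEquiv.mul_toMatrix_toPEquiv,
        Matrix.submatrix_submatrix]
      simp
    intro u v
    exact congrFun (congrFun h2 u) v
  -- the edge-step maps
  have hstep1 : ∀ u v, covRel B u v → covRel A (τ u) (τ v) := by
    intro u v h
    unfold covRel at h ⊢
    rw [← key]; exact h
  have hstep2 : ∀ u v, covRel A u v → covRel B (τ.symm u) (τ.symm v) := by
    intro u v h
    unfold covRel at h ⊢
    rw [key (τ.symm u) (τ.symm v), Equiv.apply_symm_apply, Equiv.apply_symm_apply]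
    exact h
  have hstepB : ∀ u v, covRel B u v → covRel B (Sum.swap u) (Sum.swap v) := by
    intro u v h
    unfold covRel at h ⊢
    rw [fromBlocks_swap]; exact h
  have hstepA : ∀ u v, covRel A u v → covRel A (Sum.swap u) (Sum.swap v) := by
    intro u v h
    unfold covRel at h ⊢
    rw [fromBlocks_swap]; exact h
  -- quotients (connected components of the two double covers)
  set mkB : (Fin n ⊕ Fin n) → Quotient (covSetoid B) := Quotient.mk (covSetoid B) with hmkB
  set mkA : (Fin n ⊕ Fin n) → Quotient (covSetoid A) := Quotient.mk (covSetoid A) with hmkA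
  haveI : Fintype (Quotient (covSetoid B)) := Fintype.ofFinite _
  haveI : Fintype (Quotient (covSetoid A)) := Fintype.ofFinite _
  -- induced maps on components
  set FE : Quotient (covSetoid B) ≃ Quotient (covSetoid A) :=
    { toFun := Quotient.lift (fun v => mkA (τ v))
        (fun a b hab => Quotient.sound (eqvGen_map τ hstep1 hab))
      invFun := Quotient.lift (fun v => mkB (τ.symm v))
        (fun a b hab => Quotient.sound (eqvGen_map τ.symm hstep2 hab))
      left_inv := by
        intro q
        induction q using Quotient.ind with
        | _ v => simp [hmkA, hmkB]
      right_inv := by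
        intro q
        induction q using Quotient.ind with
        | _ v => simp [hmkA, hmkB] } with hFE
  set σQ : Quotient (covSetoid B) ≃ Quotient (covSetoid B) :=
    { toFun := Quotient.lift (fun v => mkB (Sum.swap v))
        (fun a b hab => Quotient.sound (eqvGen_map Sum.swap hstepB hab))
      invFun := Quotient.lift (fun v => mkB (Sum.swap v))
        (fun a b hab => Quotient.sound (eqvGen_map Sum.swap hstepB hab))
      left_inv := by
        intro q
        induction q using Quotient.ind with
        | _ v => simp [hmkB]
      right_inv := by
        intro q
        induction q using Quotient.ind with
        | _ v => simp [hmkB] } with hσQ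
  set ρQ : Quotient (covSetoid A) ≃ Quotient (covSetoid A) :=
    { toFun := Quotient.lift (fun v => mkA (Sum.swap v))
        (fun a b hab => Quotient.sound (eqvGen_map Sum.swap hstepA hab))
      invFun := Quotient.lift (fun v => mkA (Sum.swap v))
        (fun a b hab => Quotient.sound (eqvGen_map Sum.swap hstepA hab))
      left_inv := by
        intro q
        induction q using Quotient.ind with
        | _ v => simp [hmkA]
      right_inv := by
        intro q
        induction q using Quotient.ind with
        | _ v => simp [hmkA] } with hρQ
  have hρρ : ∀ M, ρQ (ρQ M) = M := by
    intro M
    induction M using Quotient.ind with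
    | _ v => show mkA (Sum.swap (Sum.swap v)) = mkA v; rw [Sum.swap_swap]
  -- the orientation of each component
  have hεstep : ∀ u v, covRel B u v →
      ((τ u).isLeft == u.isLeft) = ((τ v).isLeft == v.isLeft) := by
    intro u v h
    have h1 : u.isLeft ≠ v.isLeft := covRel_side h
    have h2 : (τ u).isLeft ≠ (τ v).isLeft := covRel_side (hstep1 u v h)
    revert h1 h2
    generalize (τ u).isLeft = a
    generalize (τ v).isLeft = b
    generalize u.isLeft = c
    generalize v.isLeft = d
    revert a b c d
    decide
  set ε : Quotient (covSetoid B) → Bool :=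
    Quotient.lift (fun v => (τ v).isLeft == v.isLeft)
      (fun a b hab => eqvGen_lift_const _ hεstep hab) with hε
  -- the matching between components
  set u' : Quotient (covSetoid B) → Quotient (covSetoid A) :=
    fun K => if ε K then FE K else ρQ (FE K) with hu'
  obtain ⟨G, hGinj, hGopt⟩ := sdr_two_options u' (fun K => ρQ (u' (σQ K)))
    (fun M => by simp only [hu']; exact deg_two FE ρQ hρρ σQ ε M)
  -- the side-preserving bijection
  set π : (Fin n ⊕ Fin n) → (Fin n ⊕ Fin n) := fun v =>
    if G (mkB v) = u' (mkB v)
    then (if ε (mkB v) then τ v else Sum.swap (τ v))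
    else (if ε (σQ (mkB v)) then Sum.swap (τ (Sum.swap v)) else τ (Sum.swap v)) with hπ
  -- computation rules
  have hFEmk : ∀ v, FE (mkB v) = mkA (τ v) := fun v => rfl
  have hσQmk : ∀ v, σQ (mkB v) = mkB (Sum.swap v) := fun v => rfl
  have hρQmk : ∀ v, ρQ (mkA v) = mkA (Sum.swap v) := fun v => rfl
  have hεmk : ∀ v, ε (mkB v) = ((τ v).isLeft == v.isLeft) := fun v => rfl
  -- the image component of `π v` is `G ⟦v⟧`
  have himg : ∀ v, mkA (π v) = G (mkB v) := by
    intro v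
    simp only [hπ]
    by_cases hbr : G (mkB v) = u' (mkB v)
    · rw [if_pos hbr, hbr]
      simp only [hu']
      by_cases hε1 : ε (mkB v) = true
      · rw [if_pos hε1, if_pos hε1]
        exact (hFEmk v).symm
      · rw [if_neg hε1, if_neg hε1, hFEmk v, hρQmk]
    · rw [if_neg hbr]
      have hg2 := (hGopt (mkB v)).resolve_left hbr
      rw [hg2]
      simp only [hu']
      by_cases hε2 : ε (σQ (mkB v)) = true
      · rw [if_pos hε2, if_pos hε2, hσQmk, hFEmk, hρQmk]
      · rw [if_neg hε2, if_neg hε2, hσQmk, hρρ, hFEmk]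
  -- π preserves sides
  have hswleft : ∀ x : Fin n ⊕ Fin n, (Sum.swap x).isLeft = !x.isLeft := by
    rintro (x | x) <;> rfl
  have hbne1 : ∀ a b : Bool, a ≠ b → (!a) = b := by decide
  have hbne2 : ∀ a b : Bool, a ≠ !b → a = b := by decide
  have hside : ∀ v, (π v).isLeft = v.isLeft := by
    intro v
    simp only [hπ]
    split_ifs with hbr hε1 hε2
    · rw [hεmk] at hε1
      exact eq_of_beq hε1
    · rw [hεmk] at hε1
      have hne : (τ v).isLeft ≠ v.isLeft := by
        intro h; exact hε1 (by rw [h]; exact beq_self_eq_true _)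
      rw [hswleft]
      exact hbne1 _ _ hne
    · rw [hσQmk, hεmk] at hε2
      have h3 : (τ (Sum.swap v)).isLeft = !v.isLeft := by
        rw [← hswleft]; exact eq_of_beq hε2
      rw [hswleft, h3, Bool.not_not]
    · rw [hσQmk, hεmk] at hε2
      have h3 : (τ (Sum.swap v)).isLeft ≠ (Sum.swap v).isLeft := by
        intro h; exact hε2 (by rw [h]; exact beq_self_eq_true _)
      rw [hswleft] at h3
      exact hbne2 _ _ h3
  -- value preservation within a component
  have hval : ∀ v w, mkB v = mkB w →
      Matrix.fromBlocks 0 A A 0 (π v) (π w) = Matrix.fromBlocks 0 B B 0 v w := by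
    intro v w hvw
    simp only [hπ]
    rw [← hvw]
    split_ifs with h1 h2 h2'
    · exact (key v w).symm
    · rw [fromBlocks_swap]
      exact (key v w).symm
    · rw [fromBlocks_swap, ← key, fromBlocks_swap]
    · rw [← key, fromBlocks_swap]
  -- injectivity of π
  have hswinj : Function.Injective (Sum.swap : (Fin n ⊕ Fin n) → (Fin n ⊕ Fin n)) := by
    intro a b hab
    rw [← Sum.swap_swap a, hab, Sum.swap_swap]
  have hinj : Function.Injective π := by
    intro v w h
    have hc : G (mkB v) = G (mkB w) := by rw [← himg v, ← himg w, h]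
    have hK : mkB v = mkB w := hGinj hc
    simp only [hπ] at h
    rw [← hK] at h
    split_ifs at h with h1 h2 h2'
    · exact τ.injective h
    · exact τ.injective (hswinj h)
    · exact hswinj (τ.injective (hswinj h))
    · exact hswinj (τ.injective h)
  -- full value preservation
  have hvalfull : ∀ v w,
      Matrix.fromBlocks 0 A A 0 (π v) (π w) = Matrix.fromBlocks 0 B B 0 v w := by
    intro v w
    by_cases hK : mkB v = mkB w
    · exact hval v w hK
    · have hD0 : Matrix.fromBlocks 0 B B 0 v w = (0 : ℝ) := by
        by_contra hne
        exact hK (Quotient.sound (Relation.EqvGen.rel _ _ hne))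
      have hC0 : Matrix.fromBlocks 0 A A 0 (π v) (π w) = (0 : ℝ) := by
        by_contra hne
        have h5 : mkA (π v) = mkA (π w) :=
          Quotient.sound (Relation.EqvGen.rel _ _ hne)
        rw [himg v, himg w] at h5
        exact hK (hGinj h5)
      rw [hC0, hD0]
  -- extract the two permutations
  have hqex : ∀ i : Fin n, ∃ a, π (Sum.inl i) = Sum.inl a := by
    intro i
    rcases hp : π (Sum.inl i) with a | a
    · exact ⟨a, rfl⟩
    · exfalso
      have := hside (Sum.inl i)
      rw [hp] at this
      simp at this
  have hrex : ∀ j : Fin n, ∃ b, π (Sum.inr j) = Sum.inr b := by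
    intro j
    rcases hp : π (Sum.inr j) with b | b
    · exfalso
      have := hside (Sum.inr j)
      rw [hp] at this
      simp at this
    · exact ⟨b, rfl⟩
  choose q hq using hqex
  choose r hr using hrex
  have hqinj : Function.Injective q := by
    intro i i' h
    have h2 : π (Sum.inl i) = π (Sum.inl i') := by rw [hq i, hq i', h]
    exact Sum.inl.inj (hinj h2)
  have hrinj : Function.Injective r := by
    intro j j' h
    have h2 : π (Sum.inr j) = π (Sum.inr j') := by rw [hr j, hr j', h]
    exact Sum.inr.inj (hinj h2)
  have hAB : ∀ i j, B i j = A (q i) (r j) := by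
    intro i j
    have h3 := hvalfull (Sum.inl i) (Sum.inr j)
    rw [hq i, hr j] at h3
    simpa using h3.symm
  let qe : Equiv.Perm (Fin n) := Equiv.ofBijective q (Finite.injective_iff_bijective.1 hqinj)
  let re : Equiv.Perm (Fin n) := Equiv.ofBijective r (Finite.injective_iff_bijective.1 hrinj)
  refine ⟨Equiv.Perm.permMatrix ℝ qe, Equiv.Perm.permMatrix ℝ re.symm, ⟨qe, rfl⟩,
    ⟨re.symm, rfl⟩, ?_⟩
  have e1 : Equiv.Perm.permMatrix ℝ qe * A * Equiv.Perm.permMatrix ℝ re.symm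
      = (A.submatrix qe id).submatrix id re := by
    rw [show Equiv.Perm.permMatrix ℝ qe * A = A.submatrix qe id from
        PEquiv.toMatrix_toPEquiv_mul qe A,
      show A.submatrix (⇑qe) id * Equiv.Perm.permMatrix ℝ re.symm
          = (A.submatrix (⇑qe) id).submatrix id ⇑re.symm.symm from
        PEquiv.mul_toMatrix_toPEquiv _ re.symm,
      Equiv.symm_symm]
  rw [e1]
  ext i j
  simp only [Matrix.submatrix_apply, id]
  exact (hAB i j).symm
end

section
/- Let A be a real symmetric n×n matrix, j the all-ones vector, and μ₁,…,μ_p the distinct main eigenvalues of A (those eigenvalues whose eigenspace is not orthogonal to j), with P_i the orthogonal projection onto the eigenspace of μ_i. Then the product (A − μ₁ I)(A − μ₂ I)⋯(A − μ_p I) applied to j gives the zero vector. -/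
open Matrix

/-- `P` is the orthogonal projection onto the `μ`-eigenspace of `A`:
it is symmetric, idempotent, its range consists of `μ`-eigenvectors, and
it fixes every `μ`-eigenvector. -/
def IsEigenProj {n : ℕ} (A : Matrix (Fin n) (Fin n) ℝ) (μ : ℝ)
    (P : Matrix (Fin n) (Fin n) ℝ) : Prop :=
  Pᵀ = P ∧ P * P = P ∧ A * P = μ • P ∧
    ∀ v : Fin n → ℝ, A.mulVec v = μ • v → P.mulVec v = v

section Aux

variable {n : ℕ}

/-- The product of the `A - c • 1` acting on an eigenvector of `A`. -/
lemma prodAux (A : Matrix (Fin n) (Fin n) ℝ) (v : Fin n → ℝ) (ν : ℝ)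
    (hv : A *ᵥ v = ν • v) (l : List ℝ) :
    ((l.map fun c => A - c • (1 : Matrix (Fin n) (Fin n) ℝ)).prod) *ᵥ v
      = ((l.map fun c => ν - c).prod) • v := by
  induction l with
  | nil => simp [Matrix.one_mulVec]
  | cons c l ih =>
    simp only [List.map_cons, List.prod_cons, ← Matrix.mulVec_mulVec, ih,
      Matrix.mulVec_smul, Matrix.sub_mulVec, Matrix.smul_mulVec,
      Matrix.one_mulVec, hv]
    module

lemma extMulVec {M N : Matrix (Fin n) (Fin n) ℝ} (h : ∀ w, M *ᵥ w = N *ᵥ w) : M = N := by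
  ext i j
  have := congrFun (h (Pi.single j 1)) i
  simpa [Matrix.mulVec_single] using this

lemma sumMulVec {ι : Type*} (s : Finset ι) (f : ι → Matrix (Fin n) (Fin n) ℝ) (w : Fin n → ℝ) :
    (∑ k ∈ s, f k) *ᵥ w = ∑ k ∈ s, (f k) *ᵥ w := by
  funext i
  simp only [Matrix.mulVec, dotProduct, Matrix.sum_apply, Finset.sum_mul, Finset.sum_apply]
  exact Finset.sum_comm

lemma mulVecSum {ι : Type*} (s : Finset ι) (M : Matrix (Fin n) (Fin n) ℝ) (f : ι → Fin n → ℝ) :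
    M *ᵥ (∑ k ∈ s, f k) = ∑ k ∈ s, M *ᵥ (f k) :=
  map_sum (Matrix.mulVecLin M) f s

lemma vecMulVecMulVec (a b w : Fin n → ℝ) :
    (Matrix.vecMulVec a b) *ᵥ w = (b ⬝ᵥ w) • a := by
  funext i
  simp [Matrix.mulVec, Matrix.vecMulVec, dotProduct, Finset.mul_sum, mul_comm, mul_assoc,
    mul_left_comm]

lemma dotSum {ι : Type*} (s : Finset ι) (x : Fin n → ℝ) (f : ι → Fin n → ℝ) :
    x ⬝ᵥ (∑ k ∈ s, f k) = ∑ k ∈ s, x ⬝ᵥ f k := by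
  simp only [dotProduct, Finset.sum_apply, Finset.mul_sum]
  exact Finset.sum_comm

end Aux

/-- The product over all main eigenvalues of `(A - μᵢ I)` annihilates the all-ones vector. -/
theorem main_char_poly_annihilates_ones {n p : ℕ} (A : Matrix (Fin n) (Fin n) ℝ)
    (hA : A.IsSymm) (μ : Fin p → ℝ) (hμ : Function.Injective μ)
    (P : Fin p → Matrix (Fin n) (Fin n) ℝ)
    (hP : ∀ i, IsEigenProj A (μ i) (P i))
    (hmain : ∀ i, (P i).mulVec (1 : Fin n → ℝ) ≠ 0)
    (hall : ∀ (ν : ℝ) (Q : Matrix (Fin n) (Fin n) ℝ),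
      IsEigenProj A ν Q → Q.mulVec (1 : Fin n → ℝ) ≠ 0 → ∃ i, μ i = ν) :
    (List.ofFn fun i => A - μ i • (1 : Matrix (Fin n) (Fin n) ℝ)).prod.mulVec (1 : Fin n → ℝ) = 0 := by
  classical
  have hA' : A.IsHermitian := by
    rwa [Matrix.IsHermitian, conjTranspose_eq_transpose_of_trivial]
  set b := hA'.eigenvectorBasis with hb
  set lam := hA'.eigenvalues with hlam
  set e : Fin n → Fin n → ℝ := fun k => (WithLp.equiv 2 (Fin n → ℝ)) (b k) with he
  have heig : ∀ k, A *ᵥ e k = lam k • e k := fun k => hA'.mulVec_eigenvectorBasis k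
  -- orthonormality in dot-product form
  have hOrtho : ∀ k l, e k ⬝ᵥ e l = if k = l then 1 else 0 := by
    intro k l
    have h := orthonormal_iff_ite.mp b.orthonormal k l
    simpa [PiLp.inner_apply, RCLike.inner_apply, dotProduct, he, mul_comm] using h
  -- expansion of any vector in the eigenbasis
  have hexp : ∀ w : Fin n → ℝ, w = ∑ k, (e k ⬝ᵥ w) • e k := by
    intro w
    have h := b.sum_repr' ((WithLp.equiv 2 (Fin n → ℝ)).symm w)
    have h2 : ∀ k, (inner ℝ (b k) ((WithLp.equiv 2 (Fin n → ℝ)).symm w) : ℝ) = e k ⬝ᵥ w := by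
      intro k
      simp [PiLp.inner_apply, RCLike.inner_apply, dotProduct, he, mul_comm]
    calc w = (WithLp.equiv 2 (Fin n → ℝ)) ((WithLp.equiv 2 (Fin n → ℝ)).symm w) := rfl
    _ = ∑ k, (e k ⬝ᵥ w) • e k := by
        conv_lhs => rw [← h]
        simp only [← h2]
        simp [he, WithLp.ofLp_sum]
  -- key step: if ν is not among the μ i, then every ν-eigenbasis-vector is
  -- orthogonal to the all-ones vector
  have hQ : ∀ ν : ℝ, ¬ (∃ i, μ i = ν) → ∀ k, lam k = ν → e k ⬝ᵥ (1 : Fin n → ℝ) = 0 := by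
    intro ν hν
    set S : Finset (Fin n) := Finset.univ.filter (fun k => lam k = ν) with hS
    set Q : Matrix (Fin n) (Fin n) ℝ := ∑ k ∈ S, Matrix.vecMulVec (e k) (e k) with hQdef
    have hQvec : ∀ w, Q *ᵥ w = ∑ k ∈ S, (e k ⬝ᵥ w) • e k := by
      intro w
      rw [hQdef, sumMulVec]
      exact Finset.sum_congr rfl fun k _ => vecMulVecMulVec _ _ _
    have hmem : ∀ k ∈ S, lam k = ν := fun k hk => (Finset.mem_filter.mp hk).2
    have hQfix : ∀ k ∈ S, Q *ᵥ e k = e k := by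
      intro k hk
      rw [hQvec, Finset.sum_eq_single k]
      · simp [hOrtho]
      · intro l _ hlk
        rw [hOrtho l k, if_neg hlk, zero_smul]
      · intro h
        exact absurd hk h
    have hproj : IsEigenProj A ν Q := by
      refine ⟨?_, ?_, ?_, ?_⟩
      · rw [hQdef, Matrix.transpose_sum]
        refine Finset.sum_congr rfl fun k _ => ?_
        ext i j
        simp [Matrix.vecMulVec, mul_comm]
      · apply extMulVec
        intro w
        rw [← Matrix.mulVec_mulVec, hQvec w, mulVecSum]
        refine Finset.sum_congr rfl fun k hk => ?_
        rw [Matrix.mulVec_smul, hQfix k hk]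
      · apply extMulVec
        intro w
        rw [← Matrix.mulVec_mulVec, hQvec w, mulVecSum, Matrix.smul_mulVec, hQvec w,
          Finset.smul_sum]
        refine Finset.sum_congr rfl fun k hk => ?_
        rw [Matrix.mulVec_smul, heig k, hmem k hk, smul_comm]
      · intro v hv
        have hcoef : ∀ k, lam k ≠ ν → e k ⬝ᵥ v = 0 := by
          intro k hk
          have h1 : e k ⬝ᵥ (A *ᵥ v) = lam k * (e k ⬝ᵥ v) := by
            rw [Matrix.dotProduct_mulVec]
            have hvA : e k ᵥ* A = lam k • e k := by
              conv_lhs => rw [← hA]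
              rw [Matrix.vecMul_transpose, heig k]
            rw [hvA, smul_dotProduct]
            simp
          have h2 : e k ⬝ᵥ (A *ᵥ v) = ν * (e k ⬝ᵥ v) := by
            rw [hv, dotProduct_smul]
            simp
          have h3 : (lam k - ν) * (e k ⬝ᵥ v) = 0 := by
            rw [sub_mul, h1.symm.trans h2]
            ring
          rcases mul_eq_zero.mp h3 with h | h
          · exact absurd (sub_eq_zero.mp h) hk
          · exact h
        rw [hQvec]
        conv_rhs => rw [hexp v]
        refine Finset.sum_subset (Finset.subset_univ S) fun k _ hk => ?_
        have hkν : lam k ≠ ν := fun h => hk (Finset.mem_filter.mpr ⟨Finset.mem_univ _, h⟩)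
        rw [hcoef k hkν, zero_smul]
    have hQ1 : Q *ᵥ (1 : Fin n → ℝ) = 0 := by
      by_contra h
      exact hν (hall ν Q hproj h)
    intro k hk
    have hkS : k ∈ S := Finset.mem_filter.mpr ⟨Finset.mem_univ _, hk⟩
    have h0 := congrArg (fun w => e k ⬝ᵥ w) hQ1
    simp only [hQvec, dotProduct_zero] at h0
    rw [dotSum] at h0
    rw [Finset.sum_eq_single k] at h0
    · rw [dotProduct_smul, hOrtho k k, if_pos rfl] at h0
      simpa using h0
    · intro l _ hlk
      rw [dotProduct_smul, hOrtho k l, if_neg (Ne.symm hlk)]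
      simp
    · intro h
      exact absurd hkS h
  -- assemble
  have h1exp := hexp (1 : Fin n → ℝ)
  set L : List (Matrix (Fin n) (Fin n) ℝ) :=
    List.ofFn fun i => A - μ i • (1 : Matrix (Fin n) (Fin n) ℝ) with hL
  have hLmap : L = (List.ofFn μ).map fun c => A - c • (1 : Matrix (Fin n) (Fin n) ℝ) := by
    rw [List.map_ofFn]
    rfl
  have hterm : ∀ k, L.prod *ᵥ e k = (∏ i, (lam k - μ i)) • e k := by
    intro k
    rw [hLmap, prodAux A (e k) (lam k) (heig k), List.map_ofFn]
    congr 1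
    exact List.prod_ofFn
  calc L.prod *ᵥ (1 : Fin n → ℝ)
      = L.prod *ᵥ (∑ k, (e k ⬝ᵥ (1 : Fin n → ℝ)) • e k) := by rw [← h1exp]
    _ = ∑ k, (e k ⬝ᵥ (1 : Fin n → ℝ)) • (L.prod *ᵥ e k) := by
        rw [mulVecSum]
        exact Finset.sum_congr rfl fun k _ => Matrix.mulVec_smul _ _ _
    _ = 0 := by
        refine Finset.sum_eq_zero fun k _ => ?_
        by_cases hc : ∃ i, μ i = lam k
        · obtain ⟨i, hi⟩ := hc
          rw [hterm k, Finset.prod_eq_zero (Finset.mem_univ i) (by rw [hi, sub_self])]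
          simp
        · rw [hQ (lam k) hc k rfl, zero_smul]
end

section
/- Let A be a real symmetric n×n matrix with exactly p distinct main eigenvalues. Then the vectors j, Aj, A²j, …, A^{p−1}j are linearly independent, and they span the main eigenspace Main(A) = span{P₁ j, …, P_p j}; in particular dim Main(A) = p and the rank of the k-walk matrix W(k) = [j | Aj | ⋯ | A^{k−1}j] equals min{k, p}. -/
open Matrix

variable {n : ℕ} {A : Matrix (Fin n) (Fin n) ℝ}

lemma symm_dot (hA : A.IsSymm) (x y : Fin n → ℝ) :
    x ⬝ᵥ A.mulVec y = A.mulVec x ⬝ᵥ y := by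
  rw [Matrix.dotProduct_mulVec]
  congr 1
  conv_lhs => rw [← hA]
  rw [Matrix.vecMul_transpose]

lemma eig_orth (hA : A.IsSymm) {a b : ℝ} (hab : a ≠ b) {x y : Fin n → ℝ}
    (hx : A.mulVec x = a • x) (hy : A.mulVec y = b • y) : x ⬝ᵥ y = 0 := by
  have h := symm_dot hA x y
  rw [hx, hy, dotProduct_smul, smul_dotProduct, smul_eq_mul, smul_eq_mul] at h
  have h2 : (b - a) * (x ⬝ᵥ y) = 0 := by ring_nf; linarith [h]
  rcases mul_eq_zero.mp h2 with h' | h'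
  · exact absurd h' (sub_ne_zero.mpr (Ne.symm hab))
  · exact h'

lemma matrix_ext_mulVec {M N : Matrix (Fin n) (Fin n) ℝ} (h : ∀ v, M *ᵥ v = N *ᵥ v) : M = N := by
  ext x y
  have := congrFun (h (Pi.single y 1)) x
  simpa [Matrix.mulVec_single] using this

section Q
variable (b : Fin n → (Fin n → ℝ)) (lam : Fin n → ℝ)

noncomputable def Qmat (i : Fin n) : Matrix (Fin n) (Fin n) ℝ :=
  Matrix.of fun x y =>
    ∑ i' ∈ Finset.univ.filter (fun i' => lam i' = lam i), b i' x * b i' y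

lemma mulvecQ (i : Fin n) (v : Fin n → ℝ) :
    (Qmat b lam i) *ᵥ v
      = ∑ i' ∈ Finset.univ.filter (fun i' => lam i' = lam i), (b i' ⬝ᵥ v) • b i' := by
  funext x
  show (Qmat b lam i x) ⬝ᵥ v = _
  simp only [Qmat, Matrix.of_apply, dotProduct, Finset.sum_mul, Finset.sum_apply,
    Pi.smul_apply, smul_eq_mul, Finset.mul_sum]
  rw [Finset.sum_comm]
  exact Finset.sum_congr rfl fun i' _ => Finset.sum_congr rfl fun y _ => by ring

lemma projQ (hA : A.IsSymm)
    (heig : ∀ i, A *ᵥ b i = lam i • b i)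
    (horth : ∀ i i', b i ⬝ᵥ b i' = if i = i' then 1 else 0)
    (hexp : ∀ v : Fin n → ℝ, ∑ i, (b i ⬝ᵥ v) • b i = v)
    (i : Fin n) : IsEigenProj A (lam i) (Qmat b lam i) := by
  set S := Finset.univ.filter (fun i' => lam i' = lam i) with hS
  have hQv : ∀ v, (Qmat b lam i) *ᵥ v = ∑ i' ∈ S, (b i' ⬝ᵥ v) • b i' := mulvecQ b lam i
  have hdotsum : ∀ (x : Fin n → ℝ) (T : Finset (Fin n)) (c : Fin n → ℝ),
      x ⬝ᵥ (∑ i' ∈ T, c i' • b i') = ∑ i' ∈ T, c i' * (x ⬝ᵥ b i') := by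
    intro x T c
    simp [dotProduct, Finset.mul_sum, Finset.sum_mul]
    rw [Finset.sum_comm]
    exact Finset.sum_congr rfl fun i' _ => Finset.sum_congr rfl fun y _ => by ring
  refine ⟨?_, ?_, ?_, ?_⟩
  · ext x y
    simp only [Matrix.transpose_apply, Qmat, Matrix.of_apply]
    exact Finset.sum_congr rfl fun i' _ => by ring
  · apply matrix_ext_mulVec
    intro v
    rw [← Matrix.mulVec_mulVec, hQv, hQv]
    refine Finset.sum_congr rfl fun i' hi' => ?_
    congr 1
    rw [hdotsum]
    rw [Finset.sum_eq_single i']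
    · rw [horth, if_pos rfl, mul_one, dotProduct_comm]
    · intro i'' _ hne
      rw [horth, if_neg (Ne.symm hne), mul_zero]
    · intro h; exact absurd hi' h
  · apply matrix_ext_mulVec
    intro v
    rw [← Matrix.mulVec_mulVec, hQv, Matrix.smul_mulVec, hQv]
    rw [Finset.smul_sum]
    have hmap : A *ᵥ ∑ i' ∈ S, (b i' ⬝ᵥ v) • b i' = ∑ i' ∈ S, A *ᵥ ((b i' ⬝ᵥ v) • b i') := by
      simpa only [Matrix.mulVecLin_apply] using map_sum A.mulVecLin (fun i' => (b i' ⬝ᵥ v) • b i') S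
    rw [hmap]
    refine Finset.sum_congr rfl fun i' hi' => ?_
    rw [Matrix.mulVec_smul, heig i', (Finset.mem_filter.mp hi').2, smul_comm]
  · intro v hv
    rw [hQv]
    conv_rhs => rw [← hexp v]
    apply Finset.sum_subset (Finset.subset_univ S)
    intro i' _ hi'
    have hne : lam i' ≠ lam i := by
      simpa [hS] using hi'
    rw [eig_orth hA hne (heig i') hv, zero_smul]
end Q

lemma isherm (hA : A.IsSymm) : A.IsHermitian := by
  rw [Matrix.IsHermitian, Matrix.conjTranspose_eq_transpose_of_trivial]; exact hA

lemma horth' (hH : A.IsHermitian) (i i' : Fin n) :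
    (⇑(hH.eigenvectorBasis i) : Fin n → ℝ) ⬝ᵥ ⇑(hH.eigenvectorBasis i') = if i = i' then 1 else 0 := by
  have h := orthonormal_iff_ite.mp hH.eigenvectorBasis.orthonormal i i'
  rw [dotProduct_comm]
  simpa [PiLp.inner_apply, RCLike.inner_apply, dotProduct] using h

lemma hexpand (hH : A.IsHermitian) (v : Fin n → ℝ) :
    ∑ i, ((⇑(hH.eigenvectorBasis i) : Fin n → ℝ) ⬝ᵥ v) • (⇑(hH.eigenvectorBasis i) : Fin n → ℝ) = v := by
  have h := hH.eigenvectorBasis.sum_repr ((WithLp.equiv 2 _).symm v)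
  have h2 : ∀ i, hH.eigenvectorBasis.repr ((WithLp.equiv 2 _).symm v) i
      = (⇑(hH.eigenvectorBasis i) : Fin n → ℝ) ⬝ᵥ v := by
    intro i
    rw [hH.eigenvectorBasis.repr_apply_apply]
    simp only [PiLp.inner_apply, RCLike.inner_apply, dotProduct]
    refine Finset.sum_congr rfl fun x _ => ?_
    rw [mul_comm]
    rfl
  funext x
  have hx := congrArg (fun w : EuclideanSpace ℝ (Fin n) => WithLp.ofLp w x) h
  simp only [h2] at hx
  simpa [Finset.sum_apply] using hx

lemma dot_sum (x : Fin n → ℝ) {ι : Type*} (T : Finset ι) (f : ι → Fin n → ℝ) :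
    x ⬝ᵥ (∑ i ∈ T, f i) = ∑ i ∈ T, x ⬝ᵥ f i := by
  simp only [dotProduct, Finset.sum_apply, Finset.mul_sum]
  rw [Finset.sum_comm]

lemma decomp {p : ℕ} (hA : A.IsSymm) (μ : Fin p → ℝ) (hμ : Function.Injective μ)
    (P : Fin p → Matrix (Fin n) (Fin n) ℝ)
    (hP : ∀ i, IsEigenProj A (μ i) (P i))
    (hall : ∀ (ν : ℝ) (Q : Matrix (Fin n) (Fin n) ℝ),
      IsEigenProj A ν Q → Q.mulVec (1 : Fin n → ℝ) ≠ 0 → ∃ i, μ i = ν) :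
    (1 : Fin n → ℝ) = ∑ k, (P k).mulVec (1 : Fin n → ℝ) := by
  have hH : A.IsHermitian := isherm hA
  set b : Fin n → Fin n → ℝ := fun i => ⇑(hH.eigenvectorBasis i) with hbdef
  set lam : Fin n → ℝ := hH.eigenvalues with hlamdef
  have heig : ∀ i, A *ᵥ b i = lam i • b i := fun i => hH.mulVec_eigenvectorBasis i
  have horth : ∀ i i', b i ⬝ᵥ b i' = if i = i' then 1 else 0 := horth' hH
  have hexp : ∀ v : Fin n → ℝ, ∑ i, (b i ⬝ᵥ v) • b i = v := hexpand hH
  have hveig : ∀ k, A *ᵥ ((P k) *ᵥ (1 : Fin n → ℝ)) = μ k • ((P k) *ᵥ 1) := by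
    intro k
    rw [Matrix.mulVec_mulVec, (hP k).2.2.1, Matrix.smul_mulVec]
  set w : Fin n → ℝ := (1 : Fin n → ℝ) - ∑ k, (P k) *ᵥ 1 with hwdef
  have hz : ∀ i, b i ⬝ᵥ w = 0 := by
    intro i
    rw [hwdef, dotProduct_sub, dot_sum]
    by_cases hcase : ∃ k, μ k = lam i
    · obtain ⟨k0, hk0⟩ := hcase
      have hbi : A *ᵥ b i = μ k0 • b i := by rw [heig i, hk0]
      have hsum : ∑ k, b i ⬝ᵥ ((P k) *ᵥ 1) = b i ⬝ᵥ ((P k0) *ᵥ 1) := by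
        apply Finset.sum_eq_single
        · intro k _ hk
          exact eig_orth hA (fun h => hk (hμ h).symm) hbi (hveig k)
        · intro h; exact absurd (Finset.mem_univ k0) h
      rw [hsum]
      have : b i ⬝ᵥ ((P k0) *ᵥ 1) = ((P k0) *ᵥ b i) ⬝ᵥ 1 := symm_dot (hP k0).1 (b i) 1
      rw [this, (hP k0).2.2.2 (b i) hbi, sub_self]
    · push_neg at hcase
      have hzero : ∀ k, b i ⬝ᵥ ((P k) *ᵥ 1) = 0 := fun k =>
        eig_orth hA (fun h => hcase k h.symm) (heig i) (hveig k)
      have hQ := projQ b lam hA heig horth hexp i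
      have hQ1 : Qmat b lam i *ᵥ (1 : Fin n → ℝ) = 0 := by
        by_contra hne
        obtain ⟨k, hk⟩ := hall (lam i) _ hQ hne
        exact hcase k hk
      have hb1 : b i ⬝ᵥ (1 : Fin n → ℝ) = 0 := by
        have h1 : b i ⬝ᵥ (Qmat b lam i *ᵥ (1 : Fin n → ℝ)) = (Qmat b lam i *ᵥ b i) ⬝ᵥ 1 :=
          symm_dot hQ.1 (b i) 1
        rw [hQ1, hQ.2.2.2 (b i) (heig i)] at h1
        simpa using h1.symm
      rw [hb1]
      simp [hzero]
  have : w = 0 := by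
    rw [← hexp w]
    simp only [hz, zero_smul, Finset.sum_const_zero]
  exact sub_eq_zero.mp this

/-- The vectors `j, Aj, …, A^{p-1}j` are linearly independent and span the main
eigenspace; hence `dim Main(A) = p` and `rank W(k) = min k p`. -/
theorem walk_vectors_basis_of_main_eigenspace {n p : ℕ} (A : Matrix (Fin n) (Fin n) ℝ)
    (hA : A.IsSymm) (μ : Fin p → ℝ) (hμ : Function.Injective μ)
    (P : Fin p → Matrix (Fin n) (Fin n) ℝ)
    (hP : ∀ i, IsEigenProj A (μ i) (P i))
    (hmain : ∀ i, (P i).mulVec (1 : Fin n → ℝ) ≠ 0)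
    (hall : ∀ (ν : ℝ) (Q : Matrix (Fin n) (Fin n) ℝ),
      IsEigenProj A ν Q → Q.mulVec (1 : Fin n → ℝ) ≠ 0 → ∃ i, μ i = ν) :
    LinearIndependent ℝ (fun ℓ : Fin p => (A ^ (ℓ : ℕ)).mulVec (1 : Fin n → ℝ)) ∧
    Submodule.span ℝ (Set.range fun ℓ : Fin p => (A ^ (ℓ : ℕ)).mulVec (1 : Fin n → ℝ)) =
      Submodule.span ℝ (Set.range fun i => (P i).mulVec (1 : Fin n → ℝ)) ∧
    Module.finrank ℝ
      (Submodule.span ℝ (Set.range fun i => (P i).mulVec (1 : Fin n → ℝ))) = p ∧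
    ∀ k : ℕ, (Matrix.of fun (i : Fin n) (ℓ : Fin k) =>
      (A ^ (ℓ : ℕ)).mulVec (1 : Fin n → ℝ) i).rank = min k p := by
  classical
  set v : Fin p → Fin n → ℝ := fun k => (P k) *ᵥ 1 with hvdef
  set U : ℕ → Fin n → ℝ := fun ℓ => (A ^ ℓ) *ᵥ 1 with hUdef
  -- P i * A = μ i • P i
  have hPA : ∀ i, P i * A = μ i • P i := by
    intro i
    have h : (P i * A)ᵀ = μ i • P i := by
      rw [Matrix.transpose_mul, hA, (hP i).1, (hP i).2.2.1]
    calc P i * A = ((P i * A)ᵀ)ᵀ := (Matrix.transpose_transpose _).symm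
      _ = (μ i • P i)ᵀ := by rw [h]
      _ = μ i • (P i)ᵀ := Matrix.transpose_smul _ _
      _ = μ i • P i := by rw [(hP i).1]
  have hPP : ∀ i k, i ≠ k → P i * P k = 0 := by
    intro i k hik
    have h : μ i • (P i * P k) = μ k • (P i * P k) := by
      calc μ i • (P i * P k) = (μ i • P i) * P k := by rw [Matrix.smul_mul]
        _ = (P i * A) * P k := by rw [hPA i]
        _ = P i * (A * P k) := by rw [Matrix.mul_assoc]
        _ = P i * (μ k • P k) := by rw [(hP k).2.2.1]
        _ = μ k • (P i * P k) := by rw [Matrix.mul_smul]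
    have h2 : (μ i - μ k) • (P i * P k) = 0 := by
      rw [sub_smul, h, sub_self]
    rcases smul_eq_zero.mp h2 with h' | h'
    · exact absurd (sub_eq_zero.mp h') (fun hh => hik (hμ hh))
    · exact h'
  have hPv : ∀ i k, P i *ᵥ v k = if i = k then v i else 0 := by
    intro i k
    by_cases hik : i = k
    · subst hik
      rw [if_pos rfl, hvdef]
      show P i *ᵥ (P i *ᵥ 1) = P i *ᵥ 1
      rw [Matrix.mulVec_mulVec, (hP i).2.1]
    · rw [if_neg hik, hvdef, Matrix.mulVec_mulVec, hPP i k hik, Matrix.zero_mulVec]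
  have hveig : ∀ k, A *ᵥ v k = μ k • v k := by
    intro k
    rw [hvdef, Matrix.mulVec_mulVec, (hP k).2.2.1, Matrix.smul_mulVec]
  -- linear independence of v
  have hv_indep : LinearIndependent ℝ v := by
    rw [Fintype.linearIndependent_iff]
    intro g hg i
    have h0 : P i *ᵥ (∑ k, g k • v k) = g i • v i := by
      have hmap : P i *ᵥ (∑ k, g k • v k) = ∑ k, P i *ᵥ (g k • v k) := by
        simpa only [Matrix.mulVecLin_apply] using
          map_sum (P i).mulVecLin (fun k => g k • v k) Finset.univ
      rw [hmap]
      rw [Finset.sum_eq_single i]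
      · rw [Matrix.mulVec_smul, hPv i i, if_pos rfl]
      · intro k _ hk
        rw [Matrix.mulVec_smul, hPv i k, if_neg (Ne.symm hk), smul_zero]
      · intro h; exact absurd (Finset.mem_univ i) h
    rw [hg, Matrix.mulVec_zero] at h0
    rcases smul_eq_zero.mp h0.symm with h' | h'
    · exact h'
    · exact absurd h' (hmain i)
  -- decomposition of 1 and of A^ℓ 1
  have hdecomp : (1 : Fin n → ℝ) = ∑ k, v k := decomp hA μ hμ P hP hall
  have hUeq : ∀ ℓ : ℕ, U ℓ = ∑ k, (μ k ^ ℓ) • v k := by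
    intro ℓ
    have hpow : ∀ k, (A ^ ℓ) *ᵥ v k = (μ k ^ ℓ) • v k := by
      intro k
      induction ℓ with
      | zero => simp
      | succ m ih =>
        rw [pow_succ, ← Matrix.mulVec_mulVec, hveig, Matrix.mulVec_smul, ih, pow_succ]
        rw [smul_smul, mul_comm]
    rw [hUdef]
    show (A ^ ℓ) *ᵥ 1 = _
    rw [hdecomp]
    have hmap : (A ^ ℓ) *ᵥ (∑ k, v k) = ∑ k, (A ^ ℓ) *ᵥ v k := by
      simpa only [Matrix.mulVecLin_apply] using
        map_sum (A ^ ℓ).mulVecLin v Finset.univ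
    rw [hmap]
    exact Finset.sum_congr rfl fun k _ => hpow k
  -- Vandermonde inversion
  set M : Matrix (Fin p) (Fin p) ℝ := Matrix.vandermonde μ with hMdef
  have hdet : M.det ≠ 0 := by
    rw [hMdef, Matrix.det_vandermonde]
    apply Finset.prod_ne_zero_iff.mpr
    intro i _
    apply Finset.prod_ne_zero_iff.mpr
    intro j hj
    have hij : i ≠ j := fun h => by
      rw [h] at hj; exact absurd (Finset.mem_Ioi.mp hj) (lt_irrefl j)
    exact sub_ne_zero.mpr (fun h => hij (hμ h.symm))
  set N : Matrix (Fin p) (Fin p) ℝ := (Mᵀ)⁻¹ with hNdef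
  have hNM : N * Mᵀ = 1 := by
    apply Matrix.nonsing_inv_mul
    rw [Matrix.det_transpose]
    exact isUnit_iff_ne_zero.mpr hdet
  have hvsum : ∀ k : Fin p, v k = ∑ ℓ : Fin p, N k ℓ • U ℓ.val := by
    intro k
    have : ∑ ℓ : Fin p, N k ℓ • U ℓ.val = ∑ m, (N * Mᵀ) k m • v m := by
      simp only [hUeq, Finset.smul_sum, smul_smul]
      rw [Finset.sum_comm]
      refine Finset.sum_congr rfl fun m _ => ?_
      rw [← Finset.sum_smul]
      congr 1
    rw [this, hNM]
    simp [Matrix.one_apply]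
  -- spans
  have hUspan_le : ∀ ℓ : ℕ, U ℓ ∈ Submodule.span ℝ (Set.range v) := by
    intro ℓ
    rw [hUeq ℓ]
    exact Submodule.sum_mem _ fun k _ => Submodule.smul_mem _ _ (Submodule.subset_span ⟨k, rfl⟩)
  have hspan_eq : Submodule.span ℝ (Set.range fun ℓ : Fin p => U ℓ.val)
      = Submodule.span ℝ (Set.range v) := by
    apply le_antisymm
    · rw [Submodule.span_le]
      rintro x ⟨ℓ, rfl⟩
      exact hUspan_le ℓ.val
    · rw [Submodule.span_le]
      rintro x ⟨k, rfl⟩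
      rw [hvsum k]
      exact Submodule.sum_mem _ fun ℓ _ =>
        Submodule.smul_mem _ _ (Submodule.subset_span ⟨ℓ, rfl⟩)
  have hfinrank_v : Module.finrank ℝ (Submodule.span ℝ (Set.range v)) = p := by
    rw [finrank_span_eq_card hv_indep, Fintype.card_fin]
  have hU_indep : LinearIndependent ℝ (fun ℓ : Fin p => U ℓ.val) := by
    rw [linearIndependent_iff_card_eq_finrank_span, Fintype.card_fin, Set.finrank,
      hspan_eq, hfinrank_v]
  refine ⟨hU_indep, hspan_eq, hfinrank_v, ?_⟩
  intro k
  rw [Matrix.rank_eq_finrank_span_cols]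
  have hWT : Set.range (Matrix.of fun (i : Fin n) (ℓ : Fin k) => (A ^ (ℓ : ℕ) *ᵥ (1 : Fin n → ℝ)) i).col
      = Set.range (fun ℓ : Fin k => U ℓ.val) := rfl
  rw [hWT]
  rcases le_total k p with hkp | hpk
  · rw [min_eq_left hkp]
    have hcomp : LinearIndependent ℝ (fun ℓ : Fin k => U ℓ.val) :=
      hU_indep.comp (Fin.castLE hkp) (Fin.castLE_injective hkp)
    rw [finrank_span_eq_card hcomp, Fintype.card_fin]
  · rw [min_eq_right hpk]
    have hsp2 : Submodule.span ℝ (Set.range fun ℓ : Fin k => U ℓ.val)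
        = Submodule.span ℝ (Set.range v) := by
      apply le_antisymm
      · rw [Submodule.span_le]
        rintro x ⟨ℓ, rfl⟩
        exact hUspan_le ℓ.val
      · rw [Submodule.span_le]
        rintro x ⟨k', rfl⟩
        rw [hvsum k']
        exact Submodule.sum_mem _ fun ℓ _ => Submodule.smul_mem _ _
          (Submodule.subset_span ⟨⟨ℓ.val, lt_of_lt_of_le ℓ.isLt hpk⟩, rfl⟩)
    rw [hsp2, hfinrank_v]
end
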